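/- arXiv:2312.15546 — 3 statements merged into one kernel-verified Lean document; each statement's English description precedes it below -/
import Mathlib

section
/- The numerical radius of the N×N nilpotent Jordan block J₀ equals cos(π/(N+1)); in particular r(J₀) < 1 for every N, and r(J₀) → 1 as N → ∞. -/
noncomputable def opNorm {N : ℕ} (A : Matrix (Fin N) (Fin N) ℂ) : ℝ :=
  ‖Matrix.toEuclideanCLM (𝕜 := ℂ) A‖

noncomputable def numRad {N : ℕ} (A : Matrix (Fin N) (Fin N) ℂ) : ℝ :=
  sSup {r : ℝ | ∃ x : EuclideanSpace ℂ (Fin N), ‖x‖ = 1 ∧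
    r = ‖inner (𝕜 := ℂ) x (Matrix.toEuclideanCLM (𝕜 := ℂ) A x)‖}

noncomputable def numRange {N : ℕ} (A : Matrix (Fin N) (Fin N) ℂ) : Set ℂ :=
  {z : ℂ | ∃ x : EuclideanSpace ℂ (Fin N), ‖x‖ = 1 ∧
    z = inner (𝕜 := ℂ) x (Matrix.toEuclideanCLM (𝕜 := ℂ) A x)}


def J0 (N : ℕ) : Matrix (Fin N) (Fin N) ℂ :=
  Matrix.of fun i j => if (j : ℕ) = (i : ℕ) + 1 then 1 else 0

open Finset

namespace NRaux

noncomputable def th (N : ℕ) : ℝ := Real.pi / (N + 1)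

noncomputable def t (N k : ℕ) : ℝ := Real.sin (k * th N)

lemma th_pos (N : ℕ) : 0 < th N := by
  have := Real.pi_pos
  unfold th; positivity

lemma t_zero (N : ℕ) : t N 0 = 0 := by simp [t]

lemma t_succN (N : ℕ) : t N (N + 1) = 0 := by
  have h : ((N:ℝ) + 1) * th N = Real.pi := by
    unfold th; field_simp
  simp [t, Nat.cast_add, h]

lemma t_rec (N k : ℕ) : t N (k + 2) + t N k = 2 * Real.cos (th N) * t N (k + 1) := by
  have h2 : ((k:ℝ) + 2) * th N = ((k:ℝ) + 1) * th N + th N := by ring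
  have h0 : (k:ℝ) * th N = ((k:ℝ) + 1) * th N - th N := by ring
  simp only [t, Nat.cast_add, Nat.cast_ofNat, Nat.cast_one]
  rw [h2, h0, Real.sin_add, Real.sin_sub]
  ring

lemma t_pos (N k : ℕ) (h1 : 1 ≤ k) (h2 : k ≤ N) : 0 < t N k := by
  have hpi := Real.pi_pos
  apply Real.sin_pos_of_pos_of_lt_pi
  · have : (0:ℝ) < th N := th_pos N
    have : (1:ℝ) ≤ (k:ℝ) := by exact_mod_cast h1
    nlinarith [th_pos N]
  · have hk : (k:ℝ) ≤ N := by exact_mod_cast h2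
    have : (k:ℝ) * th N < ((N:ℝ) + 1) * th N := by
      nlinarith [th_pos N]
    have hNp : ((N:ℝ) + 1) * th N = Real.pi := by unfold th; field_simp
    linarith

lemma sum_identity (n : ℕ) :
    ∑ k ∈ range n, t (n+1) (k + 1) * t (n+1) (k + 2) =
      Real.cos (th (n+1)) * ∑ k ∈ range (n+1), t (n+1) (k + 1) ^ 2 := by
  set N := n + 1 with hNdef
  have key : ∀ k, 2 * Real.cos (th N) * t N (k+1) ^ 2 =
      t N (k+1) * t N (k+2) + t N k * t N (k+1) := fun k => by
    linear_combination (-(t N (k+1))) * t_rec N k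
  have e1 : 2 * Real.cos (th N) * ∑ k ∈ range N, t N (k + 1) ^ 2 =
      (∑ k ∈ range N, t N (k+1) * t N (k+2)) + ∑ k ∈ range N, t N k * t N (k+1) := by
    rw [Finset.mul_sum, ← Finset.sum_add_distrib]
    exact Finset.sum_congr rfl fun k _ => key k
  have e2 : ∑ k ∈ range N, t N (k+1) * t N (k+2) =
      (∑ k ∈ range n, t N (k+1) * t N (k+2)) + t N N * t N (N+1) := by
    rw [hNdef, Finset.sum_range_succ]
  have e3 : ∑ k ∈ range N, t N k * t N (k+1) =
      (∑ k ∈ range n, t N (k+1) * t N (k+2)) + t N 0 * t N 1 := by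
    rw [hNdef, Finset.sum_range_succ' (fun k => t N k * t N (k+1)) n]
  rw [t_succN, t_zero] at *
  linarith [e1, e2, e3]

lemma sum_ineq (n : ℕ) (b : ℕ → ℝ) (hb : ∀ k, 0 ≤ b k) :
    ∑ k ∈ range n, b k * b (k + 1) ≤
      Real.cos (th (n+1)) * ∑ k ∈ range (n+1), b k ^ 2 := by
  set N := n + 1 with hNdef
  set c := Real.cos (th N) with hc
  set h : ℕ → ℝ := fun k => b k ^ 2 * t N (k+2) / (2 * t N (k+1)) with hh
  set g : ℕ → ℝ := fun k => b k ^ 2 * t N k / (2 * t N (k+1)) with hg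
  have step : ∀ k ∈ range n, b k * b (k+1) ≤ h k + g (k+1) := by
    intro k hk
    simp only [mem_range] at hk
    have hp : 0 < t N (k+1) := t_pos N (k+1) (by omega) (by omega)
    have hq : 0 < t N (k+2) := t_pos N (k+2) (by omega) (by omega)
    have key : 2 * (t N (k+2) * b k) * (t N (k+1) * b (k+1)) ≤
        (t N (k+2) * b k)^2 + (t N (k+1) * b (k+1))^2 := two_mul_le_add_sq _ _
    simp only [hh, hg]
    rw [div_add_div _ _ (by positivity) (by positivity), le_div_iff₀ (by positivity)]
    nlinarith [key, hp, hq, hb k, hb (k+1)]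
  have hsum : ∑ k ∈ range n, b k * b (k+1) ≤
      ∑ k ∈ range n, (h k + g (k+1)) := Finset.sum_le_sum step
  have e1 : ∑ k ∈ range N, h k = (∑ k ∈ range n, h k) + h n := by
    rw [hNdef, Finset.sum_range_succ]
  have e2 : ∑ k ∈ range N, g k = (∑ k ∈ range n, g (k+1)) + g 0 := by
    rw [hNdef, Finset.sum_range_succ' g n]
  have hN1 : h n = 0 := by
    have : n + 2 = N + 1 := by omega
    simp [hh, this, t_succN]
  have hg0 : g 0 = 0 := by simp [hg, t_zero]
  have e3 : ∀ k ∈ range N, h k + g k = c * b k ^ 2 := by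
    intro k hk
    simp only [mem_range] at hk
    have hp : 0 < t N (k+1) := t_pos N (k+1) (by omega) (by omega)
    have hr := t_rec N k
    simp only [hh, hg]
    rw [← add_div, div_eq_iff (by positivity)]
    nlinarith [hr]
  calc ∑ k ∈ range n, b k * b (k+1) ≤ ∑ k ∈ range n, (h k + g (k+1)) := hsum
    _ = (∑ k ∈ range n, h k) + ∑ k ∈ range n, g (k+1) := Finset.sum_add_distrib
    _ = ∑ k ∈ range N, (h k + g k) := by
        rw [Finset.sum_add_distrib, e1, e2, hN1, hg0]; ring
    _ = ∑ k ∈ range N, c * b k ^ 2 := Finset.sum_congr rfl e3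
    _ = c * ∑ k ∈ range N, b k ^ 2 := (Finset.mul_sum _ _ _).symm

noncomputable def u {N : ℕ} (x : EuclideanSpace ℂ (Fin N)) (k : ℕ) : ℂ :=
  if h : k < N then x ⟨k, h⟩ else 0

lemma mulVec_J0 {N : ℕ} (x : EuclideanSpace ℂ (Fin N)) (i : Fin N) :
    (J0 N).mulVec x i = if h : (i : ℕ) + 1 < N then x ⟨(i:ℕ)+1, h⟩ else 0 := by
  unfold Matrix.mulVec dotProduct J0
  simp only [Matrix.of_apply]
  by_cases h : (i : ℕ) + 1 < N
  · rw [dif_pos h]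
    rw [Finset.sum_eq_single (⟨(i:ℕ)+1, h⟩ : Fin N)]
    · simp
    · intro j _ hj
      rw [if_neg, zero_mul]
      intro hc
      exact hj (Fin.ext hc)
    · simp
  · rw [dif_neg h]
    apply Finset.sum_eq_zero
    intro j _
    rw [if_neg, zero_mul]
    intro hc
    exact h (hc ▸ j.isLt)

lemma inner_J0 {N : ℕ} (x : EuclideanSpace ℂ (Fin N)) :
    inner (𝕜 := ℂ) x (Matrix.toEuclideanCLM (𝕜 := ℂ) (J0 N) x) =
      ∑ k ∈ range (N - 1), (starRingEnd ℂ) (u x k) * u x (k + 1) := by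
  have happ : ∀ i : Fin N, (Matrix.toEuclideanCLM (𝕜 := ℂ) (J0 N) x) i
      = (J0 N).mulVec x i := fun i => rfl
  rw [PiLp.inner_apply]
  simp only [RCLike.inner_apply']
  have e1 : ∀ i : Fin N, (starRingEnd ℂ) (x i) * (Matrix.toEuclideanCLM (𝕜 := ℂ) (J0 N) x) i
      = (starRingEnd ℂ) (u x (i:ℕ)) * (if (i:ℕ) + 1 < N then u x ((i:ℕ)+1) else 0) := by
    intro i
    rw [happ, mulVec_J0]
    have hu : u x (i:ℕ) = x i := by
      unfold u; rw [dif_pos i.isLt]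
    rw [hu]
    by_cases h : (i:ℕ) + 1 < N
    · rw [dif_pos h, if_pos h]
      unfold u; rw [dif_pos h]
    · rw [dif_neg h, if_neg h]
  rw [Finset.sum_congr rfl (fun i _ => e1 i)]
  rw [Fin.sum_univ_eq_sum_range
    (fun k => (starRingEnd ℂ) (u x k) * (if k + 1 < N then u x (k+1) else 0)) N]
  rw [← Finset.sum_subset (Finset.range_subset_range.2 (Nat.sub_le N 1))]
  · apply Finset.sum_congr rfl
    intro k hk
    rw [mem_range] at hk
    rw [if_pos (by omega)]
  · intro k hk hk'
    rw [mem_range] at hk hk'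
    rw [if_neg (by omega), mul_zero]

lemma norm_sq_sum {N : ℕ} (x : EuclideanSpace ℂ (Fin N)) (hx : ‖x‖ = 1) :
    ∑ k ∈ range N, ‖u x k‖ ^ 2 = 1 := by
  have h := EuclideanSpace.norm_eq x
  rw [hx] at h
  have h2 : ∑ i : Fin N, ‖x i‖ ^ 2 = 1 := Real.sqrt_eq_one.mp h.symm
  rw [← h2, ← Fin.sum_univ_eq_sum_range (fun k => ‖u x k‖^2) N]
  apply Finset.sum_congr rfl
  intro i _
  congr 1
  unfold u
  rw [dif_pos i.isLt]

lemma cos_th_nonneg (n : ℕ) : 0 ≤ Real.cos (th (n+1)) := by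
  have hpi := Real.pi_pos
  apply Real.cos_nonneg_of_mem_Icc
  constructor
  · have : (0:ℝ) < th (n+1) := th_pos (n+1)
    linarith
  · unfold th
    rw [div_le_div_iff₀ (by positivity) (by norm_num)]
    have : (2:ℝ) ≤ (n:ℝ) + 1 + 1 := by
      have : (0:ℝ) ≤ (n:ℝ) := Nat.cast_nonneg n
      linarith
    push_cast
    nlinarith

lemma bound (n : ℕ) (x : EuclideanSpace ℂ (Fin (n+1))) (hx : ‖x‖ = 1) :
    ‖inner (𝕜 := ℂ) x (Matrix.toEuclideanCLM (𝕜 := ℂ) (J0 (n+1)) x)‖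
      ≤ Real.cos (th (n+1)) := by
  rw [inner_J0]
  set b : ℕ → ℝ := fun k => ‖u x k‖ with hb
  calc ‖∑ k ∈ range ((n+1) - 1), (starRingEnd ℂ) (u x k) * u x (k + 1)‖
      ≤ ∑ k ∈ range ((n+1)-1), ‖(starRingEnd ℂ) (u x k) * u x (k + 1)‖ :=
        norm_sum_le _ _
    _ = ∑ k ∈ range n, b k * b (k+1) := by
        apply Finset.sum_congr (by norm_num)
        intro k _
        rw [norm_mul, Complex.norm_conj]
    _ ≤ Real.cos (th (n+1)) * ∑ k ∈ range (n+1), b k ^ 2 :=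
        sum_ineq n b (fun k => norm_nonneg _)
    _ = Real.cos (th (n+1)) := by rw [norm_sq_sum x hx, mul_one]

noncomputable def S (n : ℕ) : ℝ := ∑ k ∈ range (n+1), t (n+1) (k+1) ^ 2

lemma S_pos (n : ℕ) : 0 < S n := by
  apply Finset.sum_pos' (fun k _ => sq_nonneg _)
  refine ⟨0, Finset.mem_range.2 (by omega), ?_⟩
  have := t_pos (n+1) 1 le_rfl (by omega)
  positivity

noncomputable def xv (n : ℕ) : EuclideanSpace ℂ (Fin (n+1)) :=
  WithLp.toLp 2 (fun i : Fin (n+1) => (((Real.sqrt (S n))⁻¹ * t (n+1) ((i:ℕ)+1) : ℝ) : ℂ))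

lemma xv_norm (n : ℕ) : ‖xv n‖ = 1 := by
  set c := (Real.sqrt (S n))⁻¹ with hc
  have hS := S_pos n
  rw [EuclideanSpace.norm_eq]
  have e : ∑ i : Fin (n+1), ‖xv n i‖ ^ 2 = ∑ k ∈ range (n+1), (c * t (n+1) (k+1))^2 := by
    rw [← Fin.sum_univ_eq_sum_range (fun k => (c * t (n+1) (k+1))^2) (n+1)]
    apply Finset.sum_congr rfl
    intro i _
    rw [show xv n i = ((c * t (n+1) ((i:ℕ)+1) : ℝ) : ℂ) from rfl, Complex.norm_real]
    exact sq_abs _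
  rw [e]
  have : ∑ k ∈ range (n+1), (c * t (n+1) (k+1))^2 = c^2 * S n := by
    rw [show S n = ∑ k ∈ range (n+1), t (n+1) (k+1) ^ 2 from rfl, Finset.mul_sum]
    exact Finset.sum_congr rfl fun k _ => by ring
  rw [this, hc]
  rw [inv_pow, Real.sq_sqrt hS.le, inv_mul_cancel₀ hS.ne']
  exact Real.sqrt_one

lemma xv_inner (n : ℕ) :
    ‖inner (𝕜 := ℂ) (xv n) (Matrix.toEuclideanCLM (𝕜 := ℂ) (J0 (n+1)) (xv n))‖
      = Real.cos (th (n+1)) := by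
  set c := (Real.sqrt (S n))⁻¹ with hc
  have hS := S_pos n
  rw [inner_J0]
  have hu : ∀ k, k < n + 1 → u (xv n) k = ((c * t (n+1) (k+1) : ℝ) : ℂ) := by
    intro k hk
    unfold u
    rw [dif_pos hk]
    rfl
  have e : ∑ k ∈ range ((n+1) - 1), (starRingEnd ℂ) (u (xv n) k) * u (xv n) (k + 1)
      = ((∑ k ∈ range n, (c * t (n+1) (k+1)) * (c * t (n+1) (k+2)) : ℝ) : ℂ) := by
    push_cast
    apply Finset.sum_congr (by norm_num)
    intro k hk
    rw [mem_range] at hk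
    rw [hu k (by omega), hu (k+1) (by omega), Complex.conj_ofReal]
    norm_cast
  rw [e]
  have e2 : ∑ k ∈ range n, (c * t (n+1) (k+1)) * (c * t (n+1) (k+2))
      = c^2 * ∑ k ∈ range n, t (n+1) (k+1) * t (n+1) (k+2) := by
    rw [Finset.mul_sum]
    exact Finset.sum_congr rfl fun k _ => by ring
  rw [e2, sum_identity n]
  have : c ^ 2 * (Real.cos (th (n+1)) * S n) = Real.cos (th (n+1)) := by
    rw [hc, inv_pow, Real.sq_sqrt hS.le]
    field_simp
  rw [show (∑ k ∈ range (n+1), t (n+1) (k + 1) ^ 2) = S n from rfl, this,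
    Complex.norm_real, Real.norm_eq_abs, abs_of_nonneg (cos_th_nonneg n)]

lemma numRad_eq (n : ℕ) : numRad (J0 (n+1)) = Real.cos (th (n+1)) := by
  unfold numRad
  set Sset := {r : ℝ | ∃ x : EuclideanSpace ℂ (Fin (n+1)), ‖x‖ = 1 ∧
    r = ‖inner (𝕜 := ℂ) x (Matrix.toEuclideanCLM (𝕜 := ℂ) (J0 (n+1)) x)‖} with hSset
  have hmem : Real.cos (th (n+1)) ∈ Sset := ⟨xv n, xv_norm n, (xv_inner n).symm⟩
  have hub : ∀ r ∈ Sset, r ≤ Real.cos (th (n+1)) := by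
    rintro r ⟨x, hx, rfl⟩
    exact bound n x hx
  exact le_antisymm (csSup_le ⟨_, hmem⟩ hub) (le_csSup ⟨_, hub⟩ hmem)

lemma numRad_zero : numRad (J0 0) = 0 := by
  unfold numRad
  rw [show {r : ℝ | ∃ x : EuclideanSpace ℂ (Fin 0), ‖x‖ = 1 ∧
    r = ‖inner (𝕜 := ℂ) x (Matrix.toEuclideanCLM (𝕜 := ℂ) (J0 0) x)‖} = ∅ from ?_]
  · exact Real.sSup_empty
  · ext r
    simp only [Set.mem_setOf_eq, Set.mem_empty_iff_false, iff_false]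
    rintro ⟨x, hx, -⟩
    have : x = 0 := Subsingleton.elim x 0
    rw [this, norm_zero] at hx
    norm_num at hx

lemma cos_th_lt_one (n : ℕ) : Real.cos (th (n+1)) < 1 := by
  have hpi := Real.pi_pos
  have h1 : 0 < th (n+1) := th_pos (n+1)
  have h2 : th (n+1) ≤ Real.pi := by
    unfold th
    rw [div_le_iff₀ (by positivity)]
    nlinarith [Nat.cast_nonneg (α := ℝ) n]
  have := Real.cos_lt_cos_of_nonneg_of_le_pi le_rfl h2 h1
  simpa using this

end NRaux

theorem stmt_4 :
    (∀ N : ℕ, 0 < N → numRad (J0 N) = Real.cos (Real.pi / (N + 1))) ∧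
    (∀ N : ℕ, numRad (J0 N) < 1) ∧
    Filter.Tendsto (fun N : ℕ => numRad (J0 N)) Filter.atTop (nhds 1) := by
  have part1 : ∀ N : ℕ, 0 < N → numRad (J0 N) = Real.cos (Real.pi / (N + 1)) := by
    intro N hN
    obtain ⟨n, rfl⟩ : ∃ n, N = n + 1 := ⟨N - 1, by omega⟩
    exact NRaux.numRad_eq n
  refine ⟨part1, ?_, ?_⟩
  · intro N
    rcases Nat.eq_zero_or_pos N with h | h
    · rw [h, NRaux.numRad_zero]; norm_num
    · obtain ⟨n, rfl⟩ : ∃ n, N = n + 1 := ⟨N - 1, by omega⟩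
      rw [NRaux.numRad_eq n]
      exact NRaux.cos_th_lt_one n
  · have h : Filter.Tendsto (fun N : ℕ => Real.cos (Real.pi / (N + 1)))
        Filter.atTop (nhds 1) := by
      have h0 : Filter.Tendsto (fun N : ℕ => Real.pi / (N + 1)) Filter.atTop (nhds 0) := by
        have := tendsto_one_div_add_atTop_nhds_zero_nat (𝕜 := ℝ)
        have h2 : Filter.Tendsto (fun N : ℕ => Real.pi * (1 / (N + 1))) Filter.atTop
            (nhds (Real.pi * 0)) := this.const_mul Real.pi
        simpa [div_eq_mul_inv, mul_comm] using h2
      have := (Real.continuous_cos.tendsto 0).comp h0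
      simpa [Function.comp_def] using this
    apply h.congr'
    filter_upwards [Filter.eventually_ge_atTop 1] with N hN
    exact (part1 N hN).symm
end

section
/- SSP decomposition stability for RK2: if A ∈ M_N(ℂ) satisfies r(I + A) ≤ 1, then P₂(A) := I + A + A²/2 satisfies r(P₂(A)) ≤ 1, using the identity P₂(A) = (1/2)I + (1/2)(I + A)². -/
lemma aux_bddAbove {N : ℕ} (A : Matrix (Fin N) (Fin N) ℂ) :
    BddAbove {r : ℝ | ∃ x : EuclideanSpace ℂ (Fin N), ‖x‖ = 1 ∧
      r = ‖inner (𝕜 := ℂ) x (Matrix.toEuclideanCLM (𝕜 := ℂ) A x)‖} := by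
  refine ⟨‖Matrix.toEuclideanCLM (𝕜 := ℂ) A‖, ?_⟩
  rintro r ⟨x, hx, rfl⟩
  calc ‖inner (𝕜 := ℂ) x (Matrix.toEuclideanCLM (𝕜 := ℂ) A x)‖
      ≤ ‖x‖ * ‖Matrix.toEuclideanCLM (𝕜 := ℂ) A x‖ := by
        simpa using norm_inner_le_norm (𝕜 := ℂ) x (Matrix.toEuclideanCLM (𝕜 := ℂ) A x)
    _ ≤ ‖x‖ * (‖Matrix.toEuclideanCLM (𝕜 := ℂ) A‖ * ‖x‖) := by
        gcongr; exact (Matrix.toEuclideanCLM (𝕜 := ℂ) A).le_opNorm x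
    _ = ‖Matrix.toEuclideanCLM (𝕜 := ℂ) A‖ := by rw [hx]; ring

lemma abs_inner_le_numRad {N : ℕ} (A : Matrix (Fin N) (Fin N) ℂ)
    (x : EuclideanSpace ℂ (Fin N)) (hx : ‖x‖ = 1) :
    ‖inner (𝕜 := ℂ) x (Matrix.toEuclideanCLM (𝕜 := ℂ) A x)‖ ≤ numRad A :=
  le_csSup (aux_bddAbove A) ⟨x, hx, rfl⟩

lemma quad_bound {N : ℕ} (A : Matrix (Fin N) (Fin N) ℂ) (h : numRad A ≤ 1)
    (y : EuclideanSpace ℂ (Fin N)) :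
    ‖inner (𝕜 := ℂ) y (Matrix.toEuclideanCLM (𝕜 := ℂ) A y)‖ ≤ ‖y‖ ^ 2 := by
  rcases eq_or_ne y 0 with rfl | hy
  · simp
  · have hn : ‖y‖ ≠ 0 := norm_ne_zero_iff.mpr hy
    set x : EuclideanSpace ℂ (Fin N) := (‖y‖ : ℂ)⁻¹ • y with hxdef
    have hx : ‖x‖ = 1 := by
      rw [hxdef, norm_smul]
      simp [hn]
    have h1 := (abs_inner_le_numRad A x hx).trans h
    have hexp : inner (𝕜 := ℂ) x (Matrix.toEuclideanCLM (𝕜 := ℂ) A x)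
        = ((‖y‖ : ℂ)⁻¹ * (starRingEnd ℂ) (‖y‖ : ℂ)⁻¹) *
          inner (𝕜 := ℂ) y (Matrix.toEuclideanCLM (𝕜 := ℂ) A y) := by
      rw [hxdef, map_smul, inner_smul_left, inner_smul_right]
      ring
    rw [hexp] at h1
    have habs : ‖(‖y‖ : ℂ)⁻¹ * (starRingEnd ℂ) (‖y‖ : ℂ)⁻¹‖ = (‖y‖ ^ 2)⁻¹ := by
      simp [norm_mul, sq]
    rw [norm_mul, habs] at h1
    have h2 : 0 < ‖y‖ ^ 2 := by positivity
    calc ‖inner (𝕜 := ℂ) y (Matrix.toEuclideanCLM (𝕜 := ℂ) A y)‖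
        = ‖y‖ ^ 2 * ((‖y‖ ^ 2)⁻¹ * ‖inner (𝕜 := ℂ) y
            (Matrix.toEuclideanCLM (𝕜 := ℂ) A y)‖) := by field_simp
      _ ≤ ‖y‖ ^ 2 * 1 := by gcongr
      _ = ‖y‖ ^ 2 := by ring

set_option maxHeartbeats 800000 in
/-- Halmos power inequality for n = 2 (elementary proof). -/
lemma halmos_sq {N : ℕ} (B : Matrix (Fin N) (Fin N) ℂ) (h : numRad B ≤ 1)
    (x : EuclideanSpace ℂ (Fin N)) (hx : ‖x‖ = 1) :
    ‖inner (𝕜 := ℂ) x (Matrix.toEuclideanCLM (𝕜 := ℂ) (B * B) x)‖ ≤ 1 := by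
  set T := Matrix.toEuclideanCLM (𝕜 := ℂ) B with hT
  have hTT : Matrix.toEuclideanCLM (𝕜 := ℂ) (B * B) x = T (T x) := by
    rw [map_mul]; rfl
  rw [hTT]
  set w : ℂ := inner (𝕜 := ℂ) x (T (T x)) with hw
  rcases eq_or_ne w 0 with hw0 | hw0
  · rw [hw0]; simp
  -- choose a unit c with (conj c)^2 = w / |w|
  obtain ⟨c, hc⟩ : ∃ c : ℂ, c ^ 2 = (starRingEnd ℂ) w / (‖w‖ : ℂ) :=
    ⟨((starRingEnd ℂ) w / (‖w‖ : ℂ)) ^ ((((2 : ℕ) : ℂ))⁻¹ : ℂ),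
      Complex.cpow_nat_inv_pow _ two_ne_zero⟩
  have habsw : ‖w‖ ≠ 0 := by simpa using hw0
  have hcabs : ‖c‖ = 1 := by
    have : ‖c ^ 2‖ = 1 := by
      rw [hc, norm_div, Complex.norm_conj]
      simp [habsw]
    have h2 := this
    rw [norm_pow] at h2
    nlinarith [norm_nonneg c]
  set s : ℝ := ‖T x‖ ^ 2 with hs
  set yp : EuclideanSpace ℂ (Fin N) := x + c • T x with hyp
  set ym : EuclideanSpace ℂ (Fin N) := x - c • T x with hym
  have hcc : (starRingEnd ℂ) c * c = 1 := by
    have := Complex.normSq_eq_norm_sq c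
    rw [hcabs] at this
    rw [mul_comm, Complex.mul_conj]
    simp [this]
  have hc0 : c ≠ 0 := by
    intro h0
    rw [h0] at hcabs
    simp at hcabs
  have hconj : (starRingEnd ℂ) c = c⁻¹ := eq_inv_of_mul_eq_one_left hcc
  have hinner : inner (𝕜 := ℂ) yp (T yp) - inner (𝕜 := ℂ) ym (T ym)
      = 2 * c * w + 2 * (starRingEnd ℂ) c * (s : ℂ) := by
    have hsx : (inner (𝕜 := ℂ) (T x) (T x) : ℂ) = (s : ℂ) := by
      rw [inner_self_eq_norm_sq_to_K, hs]
      norm_cast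
    rw [hyp, hym]
    simp only [map_add, map_sub, map_smul, inner_add_left, inner_add_right,
      inner_sub_left, inner_sub_right, inner_smul_left, inner_smul_right, hconj]
    rw [← hw, hsx]
    field_simp
    ring
  have hb : ‖2 * c * w + 2 * (starRingEnd ℂ) c * (s : ℂ)‖ ≤ 2 * (1 + s) := by
    rw [← hinner]
    calc ‖inner (𝕜 := ℂ) yp (T yp) - inner (𝕜 := ℂ) ym (T ym)‖
        ≤ ‖inner (𝕜 := ℂ) yp (T yp)‖ + ‖inner (𝕜 := ℂ) ym (T ym)‖ :=
          norm_sub_le _ _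
      _ ≤ ‖yp‖ ^ 2 + ‖ym‖ ^ 2 := add_le_add (quad_bound B h yp) (quad_bound B h ym)
      _ = 2 * (‖x‖ * ‖x‖ + ‖c • T x‖ * ‖c • T x‖) := by
          rw [hyp, hym]
          have := parallelogram_law_with_norm ℂ x (c • T x)
          nlinarith [this]
      _ = 2 * (1 + s) := by
          rw [hx, norm_smul, hs]
          simp [hcabs]
          ring
  -- multiply by conj c : |w + conj c ^2 * s| ≤ 1 + s, and conj c ^ 2 = w/|w|
  have hkey : ‖w‖ + s ≤ 1 + s := by
    have h1 : (starRingEnd ℂ) c * (2 * c * w + 2 * (starRingEnd ℂ) c * (s : ℂ))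
        = 2 * (w + ((starRingEnd ℂ) c) ^ 2 * (s : ℂ)) := by
      rw [hconj]
      field_simp
    have hc2 : ((starRingEnd ℂ) c) ^ 2 = w / (‖w‖ : ℂ) := by
      have h5 := congrArg (starRingEnd ℂ) hc
      rw [map_pow, map_div₀] at h5
      simpa using h5
    have h2 : w + ((starRingEnd ℂ) c) ^ 2 * (s : ℂ)
        = (w / (‖w‖ : ℂ)) * ((‖w‖ : ℝ) + s : ℝ) := by
      have habsC : ((‖w‖ : ℝ) : ℂ) ≠ 0 := by exact_mod_cast habsw
      rw [hc2]
      push_cast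
      field_simp
    have h3 : ‖w + ((starRingEnd ℂ) c) ^ 2 * (s : ℂ)‖ = ‖w‖ + s := by
      rw [h2, norm_mul, norm_div]
      simp only [Complex.norm_real, Real.norm_eq_abs, abs_norm]
      rw [div_self habsw, one_mul,
        abs_of_nonneg (by positivity : (0:ℝ) ≤ ‖w‖ + s)]
    have h4 : ‖(starRingEnd ℂ) c * (2 * c * w + 2 * (starRingEnd ℂ) c * (s : ℂ))‖
        ≤ 2 * (1 + s) := by
      rw [norm_mul, Complex.norm_conj, hcabs, one_mul]
      exact hb
    rw [h1, norm_mul] at h4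
    simp only [Complex.norm_two] at h4
    rw [h3] at h4
    linarith
  linarith

theorem stmt_12 {N : ℕ} (A : Matrix (Fin N) (Fin N) ℂ) (h : numRad (1 + A) ≤ 1) :
    numRad (1 + A + (1 / 2 : ℂ) • A ^ 2) ≤ 1 := by
  apply Real.sSup_le _ zero_le_one
  rintro r ⟨x, hx, rfl⟩
  have hid : (1 : Matrix (Fin N) (Fin N) ℂ) + A + (1 / 2 : ℂ) • A ^ 2
      = (1 / 2 : ℂ) • 1 + (1 / 2 : ℂ) • ((1 + A) * (1 + A)) := by
    have : ((1 : Matrix (Fin N) (Fin N) ℂ) + A) * (1 + A) = 1 + A + A + A ^ 2 := by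
      rw [add_mul, mul_add, mul_add, sq]
      simp only [one_mul, mul_one]
      abel
    rw [this]
    module
  rw [hid]
  have happ : Matrix.toEuclideanCLM (𝕜 := ℂ)
        ((1 / 2 : ℂ) • 1 + (1 / 2 : ℂ) • ((1 + A) * (1 + A))) x
      = (1 / 2 : ℂ) • x + (1 / 2 : ℂ) •
          Matrix.toEuclideanCLM (𝕜 := ℂ) ((1 + A) * (1 + A)) x := by
    simp only [map_add, map_smul, map_one]
    rfl
  rw [happ, inner_add_right, inner_smul_right, inner_smul_right]
  have hxx : (inner (𝕜 := ℂ) x x : ℂ) = 1 := by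
    rw [inner_self_eq_norm_sq_to_K, hx]
    norm_num
  rw [hxx, mul_one]
  have hH := halmos_sq (1 + A) h x hx
  set w2 : ℂ := inner (𝕜 := ℂ) x (Matrix.toEuclideanCLM (𝕜 := ℂ) ((1 + A) * (1 + A)) x) with hw2
  have hstep : ‖(1 / 2 : ℂ) + (1 / 2 : ℂ) * w2‖
      ≤ 1 / 2 + 1 / 2 * ‖w2‖ := by
    calc ‖(1 / 2 : ℂ) + (1 / 2 : ℂ) * w2‖
        ≤ ‖(1 / 2 : ℂ)‖ + ‖(1 / 2 : ℂ) * w2‖ := norm_add_le _ _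
      _ = 1 / 2 + 1 / 2 * ‖w2‖ := by rw [norm_mul]; norm_num
  linarith
end

section
/- SSP decomposition stability for RK4: if A ∈ M_N(ℂ) satisfies r(I + A) ≤ 1, then P₄(A) := I + A + A²/2 + A³/6 + A⁴/24 satisfies r(P₄(A)) ≤ 1, via the identity P₄(A) = (3/8)I + (1/3)(I+A) + (1/4)(I+A)² + (1/24)(I+A)⁴. -/
open ContinuousLinearMap
open scoped ComplexInnerProductSpace

section KEY
variable {H : Type*} [NormedAddCommGroup H] [InnerProductSpace ℂ H] [CompleteSpace H]

lemma S_selfadj (T : H →L[ℂ] H) (u v : H) :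
    ⟪v, T u + adjoint T u⟫ = (starRingEnd ℂ) ⟪u, T v + adjoint T v⟫ := by
  have a1 : ⟪v, adjoint T u⟫ = (starRingEnd ℂ) ⟪u, T v⟫ := by
    rw [adjoint_inner_right, ← inner_conj_symm]
  have a2 : (starRingEnd ℂ) ⟪u, adjoint T v⟫ = ⟪v, T u⟫ := by
    rw [inner_conj_symm, adjoint_inner_left]
  rw [inner_add_right, inner_add_right, map_add, a1, a2]; ring

lemma S_diag (T : H →L[ℂ] H) (hT : ∀ y : H, ‖⟪y, T y⟫‖ ≤ ‖y‖ ^ 2) (u : H) :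
    |(⟪u, T u + adjoint T u⟫).re| ≤ 2 * ‖u‖ ^ 2 := by
  have h1 : ⟪u, T u + adjoint T u⟫ = ⟪u, T u⟫ + (starRingEnd ℂ) ⟪u, T u⟫ := by
    rw [inner_add_right, ← ContinuousLinearMap.adjoint_inner_left, inner_conj_symm]
  have h2 : (⟪u, T u + adjoint T u⟫).re = 2 * (⟪u, T u⟫).re := by
    rw [h1, Complex.add_re, Complex.conj_re]; ring
  rw [h2, abs_mul]
  have := Complex.abs_re_le_norm (⟪u, T u⟫)
  have := hT u
  simp only [abs_two]
  nlinarith [abs_nonneg (⟪u, T u⟫).re]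

lemma S_polar (T : H →L[ℂ] H) (hT : ∀ y : H, ‖⟪y, T y⟫‖ ≤ ‖y‖ ^ 2) (u v : H) :
    (⟪u, T v + adjoint T v⟫).re ≤ ‖u‖ ^ 2 + ‖v‖ ^ 2 := by
  set S : H →L[ℂ] H := T + adjoint T with hS
  have hSapp : ∀ w : H, S w = T w + adjoint T w := fun w => rfl
  have e1 : ⟪u + v, S (u + v)⟫ = ⟪u, S u⟫ + ⟪u, S v⟫ + ⟪v, S u⟫ + ⟪v, S v⟫ := by
    rw [map_add, inner_add_left, inner_add_right, inner_add_right]; ring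
  have e2 : ⟪u - v, S (u - v)⟫ = ⟪u, S u⟫ - ⟪u, S v⟫ - ⟪v, S u⟫ + ⟪v, S v⟫ := by
    rw [map_sub, inner_sub_left, inner_sub_right, inner_sub_right]; ring
  have e3 : (⟪v, S u⟫).re = (⟪u, S v⟫).re := by
    rw [hSapp, hSapp, S_selfadj T, Complex.conj_re]
  have e4 : (⟪u + v, S (u + v)⟫).re - (⟪u - v, S (u - v)⟫).re = 4 * (⟪u, S v⟫).re := by
    rw [e1, e2]; simp [Complex.add_re, Complex.sub_re, e3]; linarith [e3]
  simp only [hSapp] at e4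
  have b1 := S_diag T hT (u + v)
  have b2 := S_diag T hT (u - v)
  have par : ‖u + v‖ ^ 2 + ‖u - v‖ ^ 2 = 2 * (‖u‖ ^ 2 + ‖v‖ ^ 2) := by
    have := parallelogram_law_with_norm ℂ u v
    nlinarith [norm_nonneg (u+v), norm_nonneg (u-v)]
  have c1 := abs_le.mp b1
  have c2 := abs_le.mp b2
  linarith [c1.2, c2.1]

lemma S_norm (T : H →L[ℂ] H) (hT : ∀ y : H, ‖⟪y, T y⟫‖ ≤ ‖y‖ ^ 2) (x : H)
    (hx : ‖x‖ = 1) : ‖T x + adjoint T x‖ ≤ 2 := by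
  set w := T x + adjoint T x with hw
  by_cases h0 : w = 0
  · rw [h0]; norm_num
  · have hnw : (0:ℝ) < ‖w‖ := norm_pos_iff.mpr h0
    set u : H := ((‖w‖ : ℂ))⁻¹ • w with hu
    have hun : ‖u‖ = 1 := by
      rw [hu, norm_smul]
      simp [norm_inv, hnw.ne']
    have hre : (⟪u, w⟫).re = ‖w‖ := by
      have hin : (⟪w, w⟫ : ℂ).re = ‖w‖ ^ 2 := by
        simpa using @inner_self_eq_norm_sq ℂ H _ _ _ w
      rw [hu, inner_smul_left]
      simp only [map_inv₀, Complex.conj_ofReal, ← Complex.ofReal_inv, Complex.mul_re,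
        Complex.ofReal_re, Complex.ofReal_im, hin]
      field_simp
      ring
    have hp := S_polar T hT u x
    rw [← hw, hre, hun, hx] at hp
    linarith
end KEY

section KEY2
variable {H : Type*} [NormedAddCommGroup H] [InnerProductSpace ℂ H] [CompleteSpace H]

lemma key_re (T : H →L[ℂ] H) (hT : ∀ y : H, ‖⟪y, T y⟫‖ ≤ ‖y‖ ^ 2) (x : H)
    (hx : ‖x‖ = 1) : (⟪x, T (T x)⟫).re ≤ 1 := by
  have h1 : ⟪x, T (T x)⟫ = ⟪adjoint T x, T x⟫ := (adjoint_inner_left T (T x) x).symm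
  set u : H := T x with hu
  set v : H := adjoint T x with hv
  have hre : (⟪v, u⟫).re = (⟪u, v⟫).re := by simpa using inner_re_symm (𝕜 := ℂ) v u
  have hadd : ‖u + v‖ ^ 2 = ‖u‖ ^ 2 + 2 * (⟪u, v⟫).re + ‖v‖ ^ 2 := by
    have := @norm_add_sq ℂ H _ _ _ u v
    simpa using this
  have hsub : ‖u - v‖ ^ 2 = ‖u‖ ^ 2 - 2 * (⟪u, v⟫).re + ‖v‖ ^ 2 := by
    have := @norm_sub_sq ℂ H _ _ _ u v
    simpa using this
  have hS := S_norm T hT x hx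
  rw [h1]
  have h4 : 4 * (⟪u, v⟫).re = ‖u + v‖ ^ 2 - ‖u - v‖ ^ 2 := by rw [hadd, hsub]; ring
  have hS2 : ‖u + v‖ ^ 2 ≤ 4 := by nlinarith [norm_nonneg (u + v)]
  nlinarith [sq_nonneg ‖u - v‖]

lemma key_abs_unit (T : H →L[ℂ] H) (hT : ∀ y : H, ‖⟪y, T y⟫‖ ≤ ‖y‖ ^ 2) (x : H)
    (hx : ‖x‖ = 1) : ‖⟪x, T (T x)⟫‖ ≤ 1 := by
  set c : ℂ := ⟪x, T (T x)⟫ with hc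
  by_cases h0 : c = 0
  · rw [h0]; simp
  · obtain ⟨ω, hω⟩ := IsAlgClosed.exists_pow_nat_eq (k := ℂ) ((‖c‖ : ℂ) / c) (n := 2) (by norm_num)
    have hωabs : ‖ω‖ = 1 := by
      have h2 : ‖ω ^ 2‖ = 1 := by
        rw [hω, norm_div]
        simp [h0, norm_ne_zero_iff.mpr h0]
      rw [norm_pow] at h2
      nlinarith [norm_nonneg ω]
    set C : H →L[ℂ] H := ω • T with hC
    have hCapp : ∀ y : H, C y = ω • T y := fun y => rfl
    have hCnr : ∀ y : H, ‖⟪y, C y⟫‖ ≤ ‖y‖ ^ 2 := by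
      intro y
      rw [hCapp, inner_smul_right, norm_mul, hωabs, one_mul]
      exact hT y
    have hkey := key_re C hCnr x hx
    have hCC : ⟪x, C (C x)⟫ = ω ^ 2 * c := by
      rw [hCapp, hCapp, map_smul, inner_smul_right, inner_smul_right, ← hc]
      ring
    have hωc : ω ^ 2 * c = (‖c‖ : ℂ) := by
      rw [hω]; field_simp
    rw [hCC, hωc] at hkey
    simpa using hkey

lemma key_sq (T : H →L[ℂ] H) (hT : ∀ y : H, ‖⟪y, T y⟫‖ ≤ ‖y‖ ^ 2) :
    ∀ y : H, ‖⟪y, (T * T) y⟫‖ ≤ ‖y‖ ^ 2 := by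
  intro y
  rw [ContinuousLinearMap.mul_apply]
  by_cases h0 : y = 0
  · simp [h0]
  · have hny : (0:ℝ) < ‖y‖ := norm_pos_iff.mpr h0
    set x : H := ((‖y‖ : ℂ))⁻¹ • y with hx
    have hxn : ‖x‖ = 1 := by
      rw [hx, norm_smul]; simp [norm_inv, hny.ne']
    have h1 : ⟪x, T (T x)⟫ = ((‖y‖ : ℂ))⁻¹ * ((starRingEnd ℂ) ((‖y‖ : ℂ))⁻¹) * ⟪y, T (T y)⟫ := by
      rw [hx, inner_smul_left, map_smul, map_smul, inner_smul_right]
      ring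
    have h2 := key_abs_unit T hT x hxn
    rw [h1] at h2
    rw [norm_mul, norm_mul] at h2
    simp only [map_inv₀, norm_inv, Complex.norm_conj, Complex.norm_real, norm_norm, abs_of_pos hny] at h2
    have h3 : ‖⟪y, T (T y)⟫‖ * (‖y‖⁻¹ * ‖y‖⁻¹) ≤ 1 := by linarith [h2]
    have h4 : ‖⟪y, T (T y)⟫‖ ≤ 1 * (‖y‖ * ‖y‖) := by
      calc ‖⟪y, T (T y)⟫‖
          = (‖⟪y, T (T y)⟫‖ * (‖y‖⁻¹ * ‖y‖⁻¹)) * (‖y‖ * ‖y‖) := by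
            field_simp
        _ ≤ 1 * (‖y‖ * ‖y‖) := mul_le_mul_of_nonneg_right h3 (by positivity)
    simpa [pow_two] using h4

end KEY2


open ContinuousLinearMap
open scoped ComplexInnerProductSpace

section MAIN
variable {N : ℕ}

lemma matrix_ident (A : Matrix (Fin N) (Fin N) ℂ) :
    1 + A + (1/2:ℂ) • A^2 + (1/6:ℂ) • A^3 + (1/24:ℂ) • A^4
      = (3/8:ℂ) • 1 + (1/3:ℂ) • (1+A) + (1/4:ℂ) • (1+A)^2 + (1/24:ℂ) • (1+A)^4 := by
  have hp : (1 + Polynomial.X + Polynomial.C (1/2:ℂ) * Polynomial.X^2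
        + Polynomial.C (1/6:ℂ) * Polynomial.X^3 + Polynomial.C (1/24:ℂ) * Polynomial.X^4)
      = Polynomial.C (3/8:ℂ) + Polynomial.C (1/3:ℂ) * (1+Polynomial.X)
        + Polynomial.C (1/4:ℂ) * (1+Polynomial.X)^2
        + Polynomial.C (1/24:ℂ) * (1+Polynomial.X)^4 := by
    apply Polynomial.funext
    intro z
    simp only [Polynomial.eval_add, Polynomial.eval_mul, Polynomial.eval_pow, Polynomial.eval_one,
      Polynomial.eval_X, Polynomial.eval_C]
    ring
  have h := congrArg (Polynomial.aeval A) hp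
  simp only [map_add, map_mul, map_pow, map_one, Polynomial.aeval_X, Polynomial.aeval_C] at h
  simpa only [Algebra.algebraMap_eq_smul_one, ← Algebra.smul_def, smul_mul_assoc, one_mul] using h

lemma scale_bound (T : EuclideanSpace ℂ (Fin N) →L[ℂ] EuclideanSpace ℂ (Fin N))
    (h : ∀ x : EuclideanSpace ℂ (Fin N), ‖x‖ = 1 → ‖⟪x, T x⟫‖ ≤ 1) :
    ∀ y : EuclideanSpace ℂ (Fin N), ‖⟪y, T y⟫‖ ≤ ‖y‖ ^ 2 := by
  intro y
  by_cases h0 : y = 0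
  · simp [h0]
  · have hny : (0:ℝ) < ‖y‖ := norm_pos_iff.mpr h0
    set x : EuclideanSpace ℂ (Fin N) := ((‖y‖ : ℂ))⁻¹ • y with hx
    have hxn : ‖x‖ = 1 := by rw [hx, norm_smul]; simp [norm_inv, hny.ne']
    have h1 : ⟪x, T x⟫ = ((‖y‖ : ℂ))⁻¹ * ((starRingEnd ℂ) ((‖y‖ : ℂ))⁻¹) * ⟪y, T y⟫ := by
      rw [hx, inner_smul_left, map_smul, inner_smul_right]; ring
    have h2 := h x hxn
    rw [h1, norm_mul, norm_mul] at h2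
    simp only [map_inv₀, norm_inv, Complex.norm_conj, Complex.norm_real, norm_norm, abs_of_pos hny] at h2
    have h3 : ‖⟪y, T y⟫‖ * (‖y‖⁻¹ * ‖y‖⁻¹) ≤ 1 := by linarith [h2]
    have h4 : ‖⟪y, T y⟫‖ ≤ 1 * (‖y‖ * ‖y‖) := by
      calc ‖⟪y, T y⟫‖
          = (‖⟪y, T y⟫‖ * (‖y‖⁻¹ * ‖y‖⁻¹)) * (‖y‖ * ‖y‖) := by field_simp
        _ ≤ 1 * (‖y‖ * ‖y‖) := mul_le_mul_of_nonneg_right h3 (by positivity)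
    simpa [pow_two] using h4

end MAIN


open scoped ComplexInnerProductSpace in
theorem stmt_14 {N : ℕ} (A : Matrix (Fin N) (Fin N) ℂ) (h : numRad (1 + A) ≤ 1) :
    numRad (1 + A + (1 / 2 : ℂ) • A ^ 2 + (1 / 6 : ℂ) • A ^ 3 + (1 / 24 : ℂ) • A ^ 4) ≤ 1 := by
  unfold numRad at h ⊢
  apply Real.sSup_le _ zero_le_one
  rintro r ⟨x, hx, rfl⟩
  set T : EuclideanSpace ℂ (Fin N) →L[ℂ] EuclideanSpace ℂ (Fin N) :=
    Matrix.toEuclideanCLM (𝕜 := ℂ) (1 + A) with hTdef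
  have hpt : ∀ z : EuclideanSpace ℂ (Fin N), ‖z‖ = 1 → ‖⟪z, T z⟫‖ ≤ 1 := by
    intro z hz
    have hb : BddAbove {r : ℝ | ∃ x : EuclideanSpace ℂ (Fin N), ‖x‖ = 1 ∧
        r = ‖⟪x, T x⟫‖} := by
      refine ⟨‖T‖, ?_⟩
      rintro r ⟨w, hw, rfl⟩
      have h1 : ‖⟪w, T w⟫‖ ≤ ‖w‖ * ‖T w‖ := by
        exact norm_inner_le_norm w (T w)
      have h2 : ‖T w‖ ≤ ‖T‖ * ‖w‖ := T.le_opNorm w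
      rw [hw] at h1 h2
      rw [one_mul] at h1
      rw [mul_one] at h2
      exact le_trans h1 h2
    have hmem : ‖⟪z, T z⟫‖ ∈ {r : ℝ | ∃ x : EuclideanSpace ℂ (Fin N), ‖x‖ = 1 ∧
        r = ‖⟪x, T x⟫‖} := ⟨z, hz, rfl⟩
    exact le_trans (le_csSup hb hmem) h
  have hT := scale_bound T hpt
  have hT2 := key_sq T hT
  have hT4 := key_sq (T * T) hT2
  have hM : Matrix.toEuclideanCLM (𝕜 := ℂ)
        (1 + A + (1/2:ℂ) • A^2 + (1/6:ℂ) • A^3 + (1/24:ℂ) • A^4)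
      = (3/8:ℂ) • 1 + (1/3:ℂ) • T + (1/4:ℂ) • (T * T) + (1/24:ℂ) • ((T * T) * (T * T)) := by
    rw [matrix_ident, map_add, map_add, map_add, map_smul, map_smul, map_smul, map_smul,
      map_one, map_pow, map_pow, hTdef]
    have e2 : (Matrix.toEuclideanCLM (𝕜 := ℂ) (1 + A)) ^ 2
        = Matrix.toEuclideanCLM (𝕜 := ℂ) (1 + A) * Matrix.toEuclideanCLM (𝕜 := ℂ) (1 + A) :=
      pow_two _
    have e4 : (Matrix.toEuclideanCLM (𝕜 := ℂ) (1 + A)) ^ 4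
        = (Matrix.toEuclideanCLM (𝕜 := ℂ) (1 + A) * Matrix.toEuclideanCLM (𝕜 := ℂ) (1 + A))
          * (Matrix.toEuclideanCLM (𝕜 := ℂ) (1 + A) * Matrix.toEuclideanCLM (𝕜 := ℂ) (1 + A)) := by
      rw [show (4:ℕ) = 2 * 2 from rfl, pow_mul, pow_two, pow_two]
    rw [e2, e4]
  rw [hM]
  have hx2 : ⟪x, x⟫ = (1:ℂ) := by
    rw [inner_self_eq_norm_sq_to_K (𝕜 := ℂ), hx]; norm_num
  have expand : ⟪x, ((3/8:ℂ) • 1 + (1/3:ℂ) • T + (1/4:ℂ) • (T * T)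
        + (1/24:ℂ) • ((T * T) * (T * T))) x⟫
      = (3/8:ℂ) + (1/3:ℂ) * ⟪x, T x⟫ + (1/4:ℂ) * ⟪x, (T * T) x⟫
        + (1/24:ℂ) * ⟪x, ((T * T) * (T * T)) x⟫ := by
    simp only [ContinuousLinearMap.add_apply, ContinuousLinearMap.smul_apply,
      ContinuousLinearMap.one_apply, inner_add_right, inner_smul_right, hx2, mul_one]
  rw [expand]
  have a1 := hpt x hx
  have a2 : ‖⟪x, (T * T) x⟫‖ ≤ 1 := by simpa [hx] using hT2 x
  have a4 : ‖⟪x, ((T * T) * (T * T)) x⟫‖ ≤ 1 := by simpa [hx] using hT4 x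
  set c1 : ℂ := ⟪x, T x⟫
  set c2 : ℂ := ⟪x, (T * T) x⟫
  set c4 : ℂ := ⟪x, ((T * T) * (T * T)) x⟫
  have t1 : ‖(3/8:ℂ) + (1/3:ℂ) * c1 + (1/4:ℂ) * c2 + (1/24:ℂ) * c4‖
      ≤ ‖(3/8:ℂ)‖ + ‖(1/3:ℂ) * c1‖ + ‖(1/4:ℂ) * c2‖
        + ‖(1/24:ℂ) * c4‖ := by
    calc ‖(3/8:ℂ) + (1/3:ℂ) * c1 + (1/4:ℂ) * c2 + (1/24:ℂ) * c4‖
        ≤ ‖(3/8:ℂ) + (1/3:ℂ) * c1 + (1/4:ℂ) * c2‖ + ‖(1/24:ℂ) * c4‖ :=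
          norm_add_le _ _
      _ ≤ (‖(3/8:ℂ) + (1/3:ℂ) * c1‖ + ‖(1/4:ℂ) * c2‖)
            + ‖(1/24:ℂ) * c4‖ :=
          add_le_add_left (norm_add_le _ _) _
      _ ≤ ((‖(3/8:ℂ)‖ + ‖(1/3:ℂ) * c1‖) + ‖(1/4:ℂ) * c2‖)
            + ‖(1/24:ℂ) * c4‖ :=
          add_le_add_left (add_le_add_left (norm_add_le _ _) _) _
  have m1 : ‖(1/3:ℂ) * c1‖ = (1/3 : ℝ) * ‖c1‖ := by
    rw [norm_mul]; norm_num
  have m2 : ‖(1/4:ℂ) * c2‖ = (1/4 : ℝ) * ‖c2‖ := by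
    rw [norm_mul]; norm_num
  have m4 : ‖(1/24:ℂ) * c4‖ = (1/24 : ℝ) * ‖c4‖ := by
    rw [norm_mul]; norm_num
  have m0 : ‖(3/8:ℂ)‖ = (3/8 : ℝ) := by norm_num
  rw [m0, m1, m2, m4] at t1
  have hnn1 := norm_nonneg c1
  have hnn2 := norm_nonneg c2
  have hnn4 := norm_nonneg c4
  linarith
end
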